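/- Define W_k(x) recursively by W_0(x) = 1 if x ∉ S and 0 otherwise, and W_k(x) = 1 if x ∉ S, W_k(x) = ∫ W_{k-1} dT(x) if x ∈ S. If B : X → ℝ satisfies B ≥ 0 everywhere, B ≥ 1 on the complement of S, and ∫ B dT(x) ≤ B(x) + β for all x ∈ S with β ≥ 0, then W_k(x) ≤ B(x) + k·β for all k ∈ ℕ and all x ∈ X. -/
import Mathlib


open MeasureTheory
open scoped Classical

/-- Induction core of the time-invariant barrier bound: the exit-probability
value function `W` is bounded by `B(x) + k·β`. -/
theorem timeInvariant_barrier_induction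
    {X : Type*} [MeasurableSpace X]
    (T : X → Measure X) (hT : ∀ x, IsProbabilityMeasure (T x))
    (S : Set X) (hS : MeasurableSet S)
    (W : ℕ → X → ℝ)
    (hW0 : ∀ x, W 0 x = if x ∈ S then 0 else 1)
    (hWin : ∀ k, ∀ x ∈ S, W (k + 1) x = ∫ y, W k y ∂(T x))
    (hWout : ∀ k, ∀ x, x ∉ S → W (k + 1) x = 1)
    (B : X → ℝ) (β : ℝ) (hβ : 0 ≤ β)
    (hBmeas : Measurable B)
    (hBint : ∀ x, Integrable B (T x))
    (hBnonneg : ∀ x, 0 ≤ B x)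
    (hBunsafe : ∀ x, x ∉ S → 1 ≤ B x)
    (hdrift : ∀ x ∈ S, (∫ y, B y ∂(T x)) ≤ B x + β) :
    ∀ (k : ℕ) (x : X), W k x ≤ B x + k * β := by
  intro k
  induction k with
  | zero =>
    intro x
    rw [hW0]
    by_cases hx : x ∈ S
    · simp [hx]
      have := hBnonneg x
      positivity
    · simp [hx]
      have := hBunsafe x hx
      linarith
  | succ k ih =>
    intro x
    by_cases hx : x ∈ S
    · rw [hWin k x hx]
      by_cases hint : Integrable (W k) (T x)
      · have h1 : (∫ y, W k y ∂(T x)) ≤ ∫ y, (B y + k * β) ∂(T x) := by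
          apply integral_mono hint _ ih
          exact (hBint x).add (integrable_const _)
        have h2 : (∫ y, (B y + k * β) ∂(T x)) = (∫ y, B y ∂(T x)) + k * β := by
          rw [integral_add (hBint x) (integrable_const _)]
          have := hT x
          simp
        have h3 := hdrift x hx
        push_cast
        linarith [h1, h2, h3]
      · rw [integral_undef hint]
        have := hBnonneg x
        push_cast
        nlinarith
    · rw [hWout k x hx]
      have := hBunsafe x hx
      have : (0:ℝ) ≤ (k+1 : ℕ) * β := by positivity
      linarith [hBunsafe x hx]
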